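/- arXiv:0801.2272 — 5 statements merged into one kernel-verified Lean document; each statement's English description precedes it below -/
import Mathlib

section
/- Let N/K be a tower of number fields with intermediate field L, such that N/K is a tame abelian extension with Galois group G, and let H = Gal(L/K). If the ring of integers O_N is free of rank 1 as an O_K[G]-module (i.e., N/K has a normal integral basis), then O_L is free of rank 1 as an O_K[H]-module (i.e., L/K has a normal integral basis). -/
open NumberField

/-- Tame extension of number fields: no residue characteristic divides the
corresponding ramification index. -/
def IsTameExt (K N : Type*) [Field K] [Field N] [NumberField K] [NumberField N]
    [Algebra K N] : Prop :=
  ∀ P : Ideal (𝓞 N), P.IsMaximal →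
    ¬ (ringChar ((𝓞 N) ⧸ P) ∣
        Ideal.ramificationIdx'
          (P.comap (algebraMap (𝓞 K) (𝓞 N))) P)

/-- L/K has a normal integral basis: O_L is free of rank one over O_K[Gal(L/K)],
i.e. there is α ∈ O_L such that every element of O_L is uniquely an
O_K-linear combination of the Galois conjugates of α. -/
def HasNIB (K L : Type*) [Field K] [Field L] [NumberField K] [NumberField L]
    [Algebra K L] [FiniteDimensional K L] : Prop :=
  ∃ α : 𝓞 L, ∀ x : 𝓞 L, ∃! c : (L ≃ₐ[K] L) → 𝓞 K,
    (x : L) = ∑ g : L ≃ₐ[K] L, algebraMap K L (c g : K) * g (α : L)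

/-- in a tower K ⊆ L ⊆ N with N/K tame abelian, a normal integral
basis for N/K yields one for L/K. -/
theorem stmt_0 (K L N : Type*) [Field K] [Field L] [Field N]
    [NumberField K] [NumberField L] [NumberField N]
    [Algebra K L] [Algebra L N] [Algebra K N] [IsScalarTower K L N]
    [FiniteDimensional K L] [FiniteDimensional K N]
    [IsGalois K N]
    (habel : ∀ σ τ : N ≃ₐ[K] N, σ * τ = τ * σ)
    (htame : IsTameExt K N)
    (hNIB : HasNIB K N) :
    HasNIB K L := by
  classical
  -- Setup: the image of L in N
  let f : L →ₐ[K] N := IsScalarTower.toAlgHom K L N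
  let E : IntermediateField K N := f.fieldRange
  -- Step 1: L/K is Galois (every subextension of an abelian extension is Galois)
  haveI hnormalSub : E.fixingSubgroup.Normal := by
    constructor
    intro n hn g
    have : g * n * g⁻¹ = n := by rw [habel g n, mul_assoc, mul_inv_cancel, mul_one]
    rwa [this]
  haveI hGalFF : IsGalois K (IntermediateField.fixedField E.fixingSubgroup) :=
    IsGalois.of_fixedField_normal_subgroup E.fixingSubgroup
  haveI hGalE : IsGalois K E :=
    IsGalois.of_algEquiv (F := K) (E := ↥(IntermediateField.fixedField E.fixingSubgroup))
      (IntermediateField.equivOfEq (IsGalois.fixedField_fixingSubgroup E))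
  have eLE : L ≃ₐ[K] ↥E := show L ≃ₐ[K] ↥f.fieldRange from AlgEquiv.ofInjectiveField f
  haveI hGalL : IsGalois K L := IsGalois.of_algEquiv eLE.symm
  -- Step 2: the restriction homomorphism
  let π : (N ≃ₐ[K] N) →* (L ≃ₐ[K] L) := AlgEquiv.restrictNormalHom L
  have hπ : Function.Surjective π := AlgEquiv.restrictNormalHom_surjective N
  have hcomm : ∀ (g : N ≃ₐ[K] N) (y : L), g (algebraMap L N y) = algebraMap L N (π g y) :=
    fun g y => (AlgEquiv.restrictNormal_commutes g L y).symm
  obtain ⟨α, hα⟩ := hNIB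
  -- Step 3: fibers of π and the fiber sums
  let Fib : (L ≃ₐ[K] L) → Finset (N ≃ₐ[K] N) :=
    fun h => Finset.univ.filter (fun g => π g = h)
  have hmemFib : ∀ (h : L ≃ₐ[K] L) (g : N ≃ₐ[K] N), g ∈ Fib h ↔ π g = h := by
    intro h g; simp [Fib]
  set b : N := ∑ g ∈ Fib 1, g (α : N) with hb
  have hsum : ∀ (h : L ≃ₐ[K] L) (g₀ : N ≃ₐ[K] N), π g₀ = h →
      ∑ g ∈ Fib h, g (α : N) = g₀ b := by
    intro h g₀ hg₀
    rw [hb, map_sum]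
    refine Finset.sum_nbij' (fun g => g₀⁻¹ * g) (fun g => g₀ * g) ?_ ?_ ?_ ?_ ?_
    · intro g hg
      rw [hmemFib] at hg ⊢
      rw [map_mul, map_inv, hg, hg₀, inv_mul_cancel]
    · intro g hg
      rw [hmemFib] at hg ⊢
      rw [map_mul, hg, hg₀, mul_one]
    · intro g _; group
    · intro g _; group
    · intro g _
      rw [← AlgEquiv.mul_apply, mul_inv_cancel_left]
  -- Step 4: b is fixed by the kernel of π, hence lies in E
  have hfix : ∀ τ : N ≃ₐ[K] N, π τ = 1 → τ b = b := fun τ hτ => (hsum 1 τ hτ).symm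
  have hkerfix : ∀ τ : N ≃ₐ[K] N, τ ∈ E.fixingSubgroup → π τ = 1 := by
    intro τ hτ
    ext y
    apply (algebraMap L N).injective
    rw [← hcomm τ y]
    exact hτ ⟨algebraMap L N y, ⟨y, rfl⟩⟩
  have hbE : b ∈ E := by
    rw [← IsGalois.fixedField_fixingSubgroup E]
    rintro ⟨τ, hτ⟩
    exact hfix τ (hkerfix τ hτ)
  obtain ⟨β, hβ⟩ := hbE
  have hβN : algebraMap L N β = b := hβ
  have hbInt : IsIntegral ℤ b := by
    apply IsIntegral.sum
    intro g _
    exact (RingOfIntegers.isIntegral_coe α).map (RingHom.toIntAlgHom (g : N →+* N))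
  have hβInt : IsIntegral ℤ β :=
    (isIntegral_algebraMap_iff (algebraMap L N).injective).mp (hβN ▸ hbInt)
  refine ⟨⟨β, hβInt⟩, fun x => ?_⟩
  -- Step 5: the key identity ∑_{π g = h} g α = h β
  have hkey : ∀ h : L ≃ₐ[K] L, ∑ g ∈ Fib h, g (α : N) = algebraMap L N (h β) := by
    intro h
    obtain ⟨g₀, rfl⟩ := hπ h
    rw [hsum _ g₀ rfl, ← hβN, hcomm]
  -- Step 6: the master identity
  have master : ∀ e : (L ≃ₐ[K] L) → 𝓞 K,
      algebraMap L N (∑ h : L ≃ₐ[K] L, algebraMap K L ((e h : K)) * h β)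
        = ∑ g : N ≃ₐ[K] N, algebraMap K N ((e (π g) : K)) * g (α : N) := by
    intro e
    rw [map_sum,
      ← Finset.sum_fiberwise_of_maps_to (g := π) (fun g _ => Finset.mem_univ (π g))]
    refine Finset.sum_congr rfl fun h _ => ?_
    rw [map_mul, ← IsScalarTower.algebraMap_apply K L N, ← hkey h, Finset.mul_sum]
    refine Finset.sum_congr rfl fun g hg => ?_
    rw [(hmemFib h g).mp hg]
  -- Step 7: existence and uniqueness of coefficients
  set x' : 𝓞 N := algebraMap (𝓞 L) (𝓞 N) x with hx'
  have hxx : (x' : N) = algebraMap L N (x : L) := rfl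
  obtain ⟨c, hc, hcu⟩ := hα x'
  have hfac : ∀ g g' : N ≃ₐ[K] N, π g = π g' → c g = c g' := by
    intro g g' hgg'
    set τ : N ≃ₐ[K] N := g' * g⁻¹ with hτdef
    have hτ : π τ = 1 := by rw [hτdef, map_mul, map_inv, hgg', mul_inv_cancel]
    have hτg : τ⁻¹ * g' = g := by rw [hτdef]; group
    have h1 : τ ((x' : N)) = (x' : N) := by
      rw [hxx, hcomm τ (x : L), hτ, AlgEquiv.one_apply]
    have hP : (x' : N) = ∑ u : N ≃ₐ[K] N, algebraMap K N ((c (τ⁻¹ * u) : K)) * u (α : N) := by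
      calc (x' : N) = τ (x' : N) := h1.symm
        _ = ∑ u : N ≃ₐ[K] N, algebraMap K N ((c u : K)) * (τ * u) (α : N) := by
            rw [hc, map_sum]
            exact Finset.sum_congr rfl fun u _ => by
              simp only [map_mul, AlgEquiv.commutes, AlgEquiv.mul_apply]
        _ = ∑ u : N ≃ₐ[K] N, algebraMap K N ((c (τ⁻¹ * u) : K)) * u (α : N) := by
            refine Fintype.sum_equiv (Equiv.mulLeft τ) _ _ fun u => ?_
            rw [Equiv.coe_mulLeft, inv_mul_cancel_left]
    have h2 := congrFun (hcu _ hP) g'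
    rw [hτg] at h2
    exact h2
  set d : (L ≃ₐ[K] L) → 𝓞 K := fun h => c (Function.surjInv hπ h) with hd
  have hcd : ∀ g, c g = d (π g) :=
    fun g => hfac g _ (Function.surjInv_eq hπ (π g)).symm
  refine ⟨d, ?_, ?_⟩
  · apply (algebraMap L N).injective
    show algebraMap L N ((x : L)) =
      algebraMap L N (∑ h : L ≃ₐ[K] L, algebraMap K L ((d h : K)) * h β)
    rw [master d, ← hxx, hc]
    exact Finset.sum_congr rfl fun g _ => by rw [hcd g]
  · intro d' hd'
    have hd'' : (x : L) = ∑ h : L ≃ₐ[K] L, algebraMap K L ((d' h : K)) * h β := hd'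
    have hP' : (x' : N) = ∑ g : N ≃ₐ[K] N, algebraMap K N ((d' (π g) : K)) * g (α : N) := by
      rw [hxx, hd'']
      exact master d'
    have h3 := hcu _ hP'
    funext h
    have h4 := congrFun h3 (Function.surjInv hπ h)
    rw [Function.surjInv_eq hπ h] at h4
    exact h4
end

section
/- Let ℓ > 3 be an odd prime, r an odd prime, and let Δ = (ℤ/ℓℤ)^× act on the free module (ℤ/rℤ)[Δ]. Let u = Σ_{i=1}^{ℓ-1} i·δ_i^{-1} and v = Σ_{i=(ℓ+1)/2}^{ℓ-1} δ_i^{-1} in (ℤ/rℤ)[Δ], and let π be the projection to the minus part given by δ_{ℓ-i}^{-1} ↦ -δ_i^{-1} for 1 ≤ i ≤ (ℓ-1)/2. Then π(u) and π(v) generate a subgroup of the minus part isomorphic to (ℤ/rℤ)². -/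
open Finset

/-- Let ℓ > 3 be an odd prime and r an odd prime; in the group ring
(ℤ/rℤ)[Δ] with Δ = (ℤ/ℓℤ)ˣ, let u = Σ_{i=1}^{ℓ-1} i·δ_i⁻¹ and
v = Σ_{i=(ℓ+1)/2}^{ℓ-1} δ_i⁻¹.  Projecting to the minus part via
δ_{ℓ-i}⁻¹ ↦ -δ_i⁻¹ (coefficientwise: π(x)(d) = x(d) - x(-d)), the images of u and v
generate a subgroup isomorphic to (ℤ/rℤ)². -/
theorem stmt_8 (ℓ r : ℕ) [Fact ℓ.Prime] [Fact r.Prime]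
    (hlodd : Odd ℓ) (hl3 : 3 < ℓ) (hrodd : Odd r) :
    ∀ u v : MonoidAlgebra (ZMod r) (ZMod ℓ)ˣ,
      u = MonoidAlgebra.ofCoeff (∑ d : (ZMod ℓ)ˣ, Finsupp.single d⁻¹ (((d : ZMod ℓ).val : ZMod r))) →
      v = MonoidAlgebra.ofCoeff (∑ d ∈ Finset.univ.filter (fun d : (ZMod ℓ)ˣ => (ℓ + 1) / 2 ≤ (d : ZMod ℓ).val),
            Finsupp.single d⁻¹ (1 : ZMod r)) →
      ∀ π : MonoidAlgebra (ZMod r) (ZMod ℓ)ˣ → ((ZMod ℓ)ˣ → ZMod r),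
        (∀ x d, π x d = x.coeff d - x.coeff (-d)) →
        Nonempty (↥(AddSubgroup.closure ({π u, π v} : Set ((ZMod ℓ)ˣ → ZMod r)))
          ≃+ (ZMod r × ZMod r)) := by
  intro u v hu hv π hπ
  obtain ⟨k, hk⟩ := hlodd
  have hl5 : 5 ≤ ℓ := by
    rcases Nat.lt_or_ge ℓ 5 with h | h
    · interval_cases ℓ <;> omega
    · exact h
  have hl1 : 1 < ℓ := by omega
  -- the unit 2
  have h2l : Nat.Coprime 2 ℓ := by
    have : ¬ ℓ ∣ 2 := fun h => by have := Nat.le_of_dvd (by norm_num) h; omega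
    exact Nat.coprime_comm.mp ((Fact.out : ℓ.Prime).coprime_iff_not_dvd.mpr this)
  set w : (ZMod ℓ)ˣ := ZMod.unitOfCoprime 2 h2l with hwdef
  have hw : (w : ZMod ℓ) = 2 := by
    rw [hwdef, ZMod.coe_unitOfCoprime]; norm_num
  -- value of u as a function
  have huval : ∀ e : (ZMod ℓ)ˣ,
      u.coeff e = ((((e⁻¹ : (ZMod ℓ)ˣ) : ZMod ℓ)).val : ZMod r) := by
    intro e
    rw [hu, MonoidAlgebra.coeff_ofCoeff, Finsupp.finset_sum_apply]
    simp only [Finsupp.single_apply, inv_eq_iff_eq_inv]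
    rw [Finset.sum_ite_eq' Finset.univ e⁻¹ (fun d => (((d : (ZMod ℓ)ˣ) : ZMod ℓ).val : ZMod r))]
    rw [if_pos (Finset.mem_univ _)]
  have hvval : ∀ e : (ZMod ℓ)ˣ,
      v.coeff e = if (ℓ + 1) / 2 ≤ (((e⁻¹ : (ZMod ℓ)ˣ) : ZMod ℓ)).val then (1 : ZMod r) else 0 := by
    intro e
    rw [hv, MonoidAlgebra.coeff_ofCoeff, Finsupp.finset_sum_apply]
    simp only [Finsupp.single_apply, inv_eq_iff_eq_inv]
    rw [Finset.sum_ite_eq' _ e⁻¹ (fun _ => (1 : ZMod r))]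
    simp only [Finset.mem_filter, Finset.mem_univ, true_and]
  -- val computations
  have hv1 : ((1 : (ZMod ℓ)ˣ) : ZMod ℓ).val = 1 := by
    rw [Units.val_one, ZMod.val_one]
  have hneg1 : (((-1 : (ZMod ℓ)ˣ) : ZMod ℓ)).val = ℓ - 1 := by
    have h1 : ((-1 : (ZMod ℓ)ˣ) : ZMod ℓ) = ((ℓ - 1 : ℕ) : ZMod ℓ) := by
      push_cast [Nat.cast_sub (by omega : 1 ≤ ℓ)]
      simp [ZMod.natCast_self]
    rw [h1, ZMod.val_cast_of_lt (by omega)]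
  have hwval : ((w : (ZMod ℓ)ˣ) : ZMod ℓ).val = 2 := by
    rw [hw]
    have : (2 : ZMod ℓ) = ((2 : ℕ) : ZMod ℓ) := by norm_num
    rw [this, ZMod.val_cast_of_lt (by omega)]
  have hnegw : (((-w : (ZMod ℓ)ˣ) : ZMod ℓ)).val = ℓ - 2 := by
    have h1 : ((-w : (ZMod ℓ)ˣ) : ZMod ℓ) = ((ℓ - 2 : ℕ) : ZMod ℓ) := by
      push_cast [Nat.cast_sub (by omega : 2 ≤ ℓ), hw]
      simp [ZMod.natCast_self]
    rw [h1, ZMod.val_cast_of_lt (by omega)]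
  -- inverses
  have hinv1 : ((1 : (ZMod ℓ)ˣ))⁻¹ = 1 := inv_one
  have hinvneg1 : ((-1 : (ZMod ℓ)ˣ))⁻¹ = -1 := by
    rw [inv_neg, inv_one]
  have hinvw : ((w⁻¹ : (ZMod ℓ)ˣ))⁻¹ = w := inv_inv w
  have hinvnegw : ((-(w⁻¹) : (ZMod ℓ)ˣ))⁻¹ = -w := by
    rw [inv_neg, inv_inv]
  set F : (ZMod ℓ)ˣ → ZMod r := π u with hF
  set G : (ZMod ℓ)ˣ → ZMod r := π v with hG
  -- values of F and G at 1 and w⁻¹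
  have hF1 : F 1 = (1 : ZMod r) - ((ℓ - 1 : ℕ) : ZMod r) := by
    rw [hF, hπ, huval, huval, hinv1, hinvneg1, hv1, hneg1]; norm_num
  have hF2 : F w⁻¹ = ((2 : ℕ) : ZMod r) - ((ℓ - 2 : ℕ) : ZMod r) := by
    rw [hF, hπ, huval, huval, hinvw, hinvnegw, hwval, hnegw]
  have hG1 : G 1 = -1 := by
    rw [hG, hπ, hvval, hvval, hinv1, hinvneg1, hv1, hneg1]
    rw [if_neg (by omega), if_pos (by omega)]
    ring
  have hG2 : G w⁻¹ = -1 := by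
    rw [hG, hπ, hvval, hvval, hinvw, hinvnegw, hwval, hnegw]
    rw [if_neg (by omega), if_pos (by omega)]
    ring
  -- the homomorphism
  let ψ : ZMod r × ZMod r →+ ((ZMod ℓ)ˣ → ZMod r) :=
    { toFun := fun p => p.1 • F + p.2 • G
      map_zero' := by simp
      map_add' := by intro p q; simp only [Prod.fst_add, Prod.snd_add, add_smul]; abel }
  have hψ : ∀ p : ZMod r × ZMod r, ψ p = p.1 • F + p.2 • G := fun p => rfl
  haveI : NeZero r := ⟨(Fact.out : r.Prime).ne_zero⟩
  have two_ne : (2 : ZMod r) ≠ 0 := by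
    intro h
    have : (((2 : ℕ) : ZMod r)) = 0 := by exact_mod_cast h
    rw [ZMod.natCast_eq_zero_iff] at this
    have h2 := ((Nat.prime_dvd_prime_iff_eq (Fact.out : r.Prime) Nat.prime_two).mp this)
    obtain ⟨m, hm⟩ := hrodd
    omega
  have hinj : Function.Injective ψ := by
    rw [injective_iff_map_eq_zero]
    intro p hp
    have h1 := congrFun hp 1
    have h2 := congrFun hp w⁻¹
    simp only [hψ, Pi.add_apply, Pi.smul_apply, smul_eq_mul, hF1, hF2, hG1, hG2,
      Pi.zero_apply] at h1 h2
    rw [Nat.cast_sub (by omega : 1 ≤ ℓ)] at h1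
    rw [Nat.cast_sub (by omega : 2 ≤ ℓ)] at h2
    have h3 : (2 : ZMod r) * p.1 = 0 := by
      push_cast at h1 h2 ⊢
      linear_combination h2 - h1
    have hp1 : p.1 = 0 := by
      rcases mul_eq_zero.mp h3 with h | h
      · exact absurd h two_ne
      · exact h
    have hp2 : p.2 = 0 := by
      rw [hp1] at h1
      simpa using h1
    exact Prod.ext hp1 hp2
  -- range = closure
  have hsmul : ∀ (c : ZMod r) (x : (ZMod ℓ)ˣ → ZMod r),
      x ∈ AddSubgroup.closure ({F, G} : Set ((ZMod ℓ)ˣ → ZMod r)) →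
      c • x ∈ AddSubgroup.closure ({F, G} : Set ((ZMod ℓ)ˣ → ZMod r)) := by
    intro c x hx
    have hcx : c • x = c.val • x := by
      funext d
      simp [Pi.smul_apply, smul_eq_mul, nsmul_eq_mul, ZMod.natCast_rightInverse c]
    rw [hcx]
    exact AddSubgroup.nsmul_mem _ hx _
  have hFmem : F ∈ ({F, G} : Set ((ZMod ℓ)ˣ → ZMod r)) := by simp
  have hGmem : G ∈ ({F, G} : Set ((ZMod ℓ)ˣ → ZMod r)) := by simp
  have hrange : ψ.range = AddSubgroup.closure ({F, G} : Set ((ZMod ℓ)ˣ → ZMod r)) := by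
    apply le_antisymm
    · rintro x ⟨p, rfl⟩
      rw [hψ]
      exact add_mem (hsmul _ _ (AddSubgroup.subset_closure hFmem))
        (hsmul _ _ (AddSubgroup.subset_closure hGmem))
    · rw [AddSubgroup.closure_le]
      rintro x (rfl | rfl)
      · exact ⟨(1, 0), by simp [hψ]⟩
      · exact ⟨(0, 1), by simp [hψ]⟩
  exact ⟨(AddEquiv.addSubgroupCongr hrange.symm).trans (AddMonoidHom.ofInjective hinj).symm⟩
end

section
/- Let G be a finite abelian group, K a number field, and M, M' two tame G-Galois algebra extensions of K that are arithmetically disjoint over K. Then the class invariant map satisfies pic(M * M') = pic(M)·pic(M') in Pic(O_K[G]), where * denotes the product in the group H(K,G) of G-extensions. -/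
open NumberField TensorProduct

set_option synthInstance.maxHeartbeats 800000
set_option maxHeartbeats 1600000

section GaloisAlgebras

variable (K : Type*) [Field K] [NumberField K]
variable (G : Type*) [CommGroup G] [Fintype G]

variable (M : Type*) [CommRing M] [Algebra K M]
  [MulSemiringAction G M] [SMulCommClass G K M]

/-- The canonical map M ⊗_K M → Π_G M, x ⊗ y ↦ (x · g(y))_g . -/
noncomputable def galoisMap : TensorProduct K M M →ₗ[K] (G → M) :=
  TensorProduct.lift
    (LinearMap.mk₂ K (fun x y => fun g => x * g • y)
      (fun x x' y => by funext g; simp [add_mul])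
      (fun c x y => by funext g; simp [smul_mul_assoc])
      (fun x y y' => by funext g; simp [smul_add, mul_add])
      (fun c x y => by funext g; show x * g • c • y = c • (x * g • y); rw [smul_comm g c y, mul_smul_comm]))

/-- `M` is a `G`-Galois algebra over `K`: the `G`-fixed elements are exactly `K` and
the canonical map `M ⊗_K M → Π_G M` is bijective. -/
noncomputable def IsGaloisAlgebra : Prop :=
  (∀ x : M, (∀ g : G, g • x = x) → ∃ a : K, x = algebraMap K M a) ∧
  Function.Bijective (galoisMap K G M)

/-- `M` is tame over `K`: the trace maps the integral elements onto `O_K`. -/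
noncomputable def IsTameGalgebra : Prop :=
  ∀ a : 𝓞 K, ∃ x : M, IsIntegral (𝓞 K) x ∧
    Algebra.trace K M x = algebraMap (𝓞 K) K a

/-- `g • ·` preserves integrality, giving an action on the integral closure. -/
noncomputable def gInt (g : G) (x : ↥(integralClosure (𝓞 K) M)) :
    ↥(integralClosure (𝓞 K) M) :=
  ⟨g • (x : M), by
    have hx : IsIntegral (𝓞 K) (x : M) := x.2
    have : g • (x : M) =
        (MulSemiringAction.toAlgHom K M g) (x : M) := rfl
    rw [this]
    exact IsIntegral.map (MulSemiringAction.toAlgHom K M g) hx⟩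

end GaloisAlgebras

----------------------------------------------------------------
-- Auxiliary material for the proof of stmt_12
----------------------------------------------------------------

set_option linter.unusedSectionVars false

section FlatAux

theorem locModule_noZeroSMul {R : Type*} [CommRing R] [IsDomain R] {M : Type*} [AddCommGroup M]
    [Module R M] [NoZeroSMulDivisors R M] (P : Ideal R) [P.IsPrime] :
    NoZeroSMulDivisors (Localization.AtPrime P) (LocalizedModule P.primeCompl M) := by
  constructor
  intro r m h
  obtain ⟨⟨a, s⟩, hr⟩ := IsLocalization.surj P.primeCompl r
  by_cases ha : a = 0
  · left
    subst ha
    rw [map_zero] at hr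
    have hu := IsLocalization.map_units (Localization.AtPrime P) s
    exact (hu.mul_left_eq_zero).mp hr
  · right
    have h2 : (algebraMap R (Localization.AtPrime P) a) • m = 0 := by
      rw [← hr, mul_comm, mul_smul, h, smul_zero]
    rw [algebraMap_smul] at h2
    induction m using LocalizedModule.induction_on with
    | h x t =>
      rw [LocalizedModule.smul'_mk] at h2
      have h3 : LocalizedModule.mk (a • x) t = LocalizedModule.mk (0 : M) (1 : P.primeCompl) := by
        simpa [LocalizedModule.zero_mk] using h2
      rw [LocalizedModule.mk_eq] at h3
      obtain ⟨u, hu⟩ := h3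
      simp only [smul_zero] at hu
      have : ((u : R) * a) • x = 0 := by
        have h4 := hu
        rw [Submonoid.smul_def, Submonoid.smul_def, OneMemClass.coe_one, one_smul, smul_smul] at h4
        exact h4
      rcases smul_eq_zero.mp this with hc | hx
      · exfalso
        have hu0 : (u : R) ≠ 0 := fun h0 => u.2 (h0 ▸ P.zero_mem)
        rcases mul_eq_zero.mp hc with h1 | h1
        · exact hu0 h1
        · exact ha h1
      · rw [hx, LocalizedModule.zero_mk]

theorem flat_of_dedekind {R : Type*} [CommRing R] [IsDedekindDomain R] (hnf : ¬ IsField R)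
    {M : Type*} [AddCommGroup M] [Module R M] [Module.Finite R M] [NoZeroSMulDivisors R M] :
    Module.Flat R M := by
  haveI : Module.FinitePresentation R M := Module.finitePresentation_of_finite R M
  haveI : Module.Projective R M := by
    refine Module.projective_of_localization_maximal' (fun P _ => Localization.AtPrime P)
      (fun P _ => LocalizedModule P.primeCompl M)
      (fun P _ => LocalizedModule.mkLinearMap P.primeCompl M) ?_
    intro I hI
    haveI : I.IsMaximal := hI
    have hne : I ≠ ⊥ := Ring.ne_bot_of_isMaximal_of_not_isField hI hnf
    haveI := IsLocalization.AtPrime.isDiscreteValuationRing_of_dedekind_domain R hne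
      (Localization.AtPrime I)
    haveI := locModule_noZeroSMul (M := M) I
    haveI : Module.Free (Localization.AtPrime I) (LocalizedModule I.primeCompl M) :=
      Module.free_of_finite_type_torsion_free'
    infer_instance
  exact Module.Flat.of_projective

end FlatAux

section OneAlgebra

variable (K : Type*) [Field K] [NumberField K]
variable (G : Type*) [CommGroup G] [Fintype G]
variable (M : Type*) [CommRing M] [Algebra K M]
  [MulSemiringAction G M] [SMulCommClass G K M]

theorem galoisMap_tmul (x y : M) : galoisMap K G M (x ⊗ₜ[K] y) = fun g => x * g • y := rfl

theorem trace_eq_sum_smul [Module.Finite K M] (hbij : Function.Bijective (galoisMap K G M))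
    (x : M) : algebraMap K M (Algebra.trace K M x) = ∑ g : G, g • x := by
  classical
  have hsmul : ∀ (m : M) (t : TensorProduct K M M),
      galoisMap K G M (m • t) = m • galoisMap K G M t := by
    intro m t
    induction t using TensorProduct.induction_on with
    | zero => simp
    | tmul a b =>
        rw [TensorProduct.smul_tmul', galoisMap_tmul]
        funext g
        show (m • a) * g • b = m • (a * g • b)
        rw [smul_eq_mul, smul_eq_mul]
        ring
    | add s t hs ht => rw [smul_add, map_add, hs, ht, map_add, smul_add]
  let gm : TensorProduct K M M →ₗ[M] (G → M) :=
    { toFun := galoisMap K G M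
      map_add' := map_add _
      map_smul' := hsmul }
  let e : TensorProduct K M M ≃ₗ[M] (G → M) := LinearEquiv.ofBijective gm hbij
  set d : G → M := fun g => g • x with hd
  have key : ∀ t, e ((Algebra.lmul K M x).baseChange M t) = d * e t := by
    intro t
    induction t using TensorProduct.induction_on with
    | zero => simp
    | tmul a b =>
        show galoisMap K G M (a ⊗ₜ[K] (x * b)) = d * galoisMap K G M (a ⊗ₜ[K] b)
        funext g
        show a * g • (x * b) = d g * (a * g • b)
        rw [smul_mul', hd]
        ring
    | add s t hs ht => rw [map_add, map_add, hs, ht, map_add, mul_add]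
  have hconj : e.conj ((Algebra.lmul K M x).baseChange M) = LinearMap.mulLeft M d := by
    apply LinearMap.ext
    intro v
    obtain ⟨t, rfl⟩ := e.surjective v
    rw [LinearEquiv.conj_apply]
    show e (((Algebra.lmul K M x).baseChange M) (e.symm (e t))) = d * e t
    rw [e.symm_apply_apply, key]
  have htr : LinearMap.trace M (G → M) (LinearMap.mulLeft M d) = ∑ g : G, d g := by
    rw [LinearMap.trace_eq_matrix_trace M (Pi.basisFun M G)]
    have hm : LinearMap.toMatrix (Pi.basisFun M G) (Pi.basisFun M G) (LinearMap.mulLeft M d)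
        = Matrix.diagonal d := by
      ext i j
      rw [LinearMap.toMatrix_apply, Pi.basisFun_repr]
      show (d * Pi.basisFun M G j) i = Matrix.diagonal d i j
      rw [Pi.mul_apply, Pi.basisFun_apply, Matrix.diagonal]
      by_cases h : i = j
      · subst h; simp
      · simp [Pi.single_apply, h, Ne.symm h]
    rw [hm, Matrix.trace_diagonal]
  calc algebraMap K M (Algebra.trace K M x)
      = algebraMap K M (LinearMap.trace K M (Algebra.lmul K M x)) := by
        rw [Algebra.trace_apply]
    _ = LinearMap.trace M _ ((Algebra.lmul K M x).baseChange M) := by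
        rw [LinearMap.trace_baseChange]
    _ = LinearMap.trace M _ (e.conj ((Algebra.lmul K M x).baseChange M)) := by
        rw [LinearMap.trace_conj']
    _ = ∑ g : G, d g := by rw [hconj, htr]

theorem nontrivial_of_tame (htame : IsTameGalgebra K M) : Nontrivial M := by
  by_contra h
  rw [not_nontrivial_iff_subsingleton] at h
  obtain ⟨x, -, hx⟩ := htame 1
  have h0 : Algebra.lmul K M x = 0 := Subsingleton.elim _ _
  rw [Algebra.trace_apply, h0, map_zero, map_one] at hx
  exact one_ne_zero hx.symm

theorem exists_x0 [Module.Finite K M] (hbij : Function.Bijective (galoisMap K G M))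
    (htame : IsTameGalgebra K M) :
    ∃ x₀ : ↥(integralClosure (𝓞 K) M), ∑ g : G, gInt K G M g x₀ = 1 := by
  obtain ⟨x, hint, hx⟩ := htame 1
  refine ⟨⟨x, hint⟩, ?_⟩
  have h1 : ((∑ g : G, gInt K G M g ⟨x, hint⟩ : ↥(integralClosure (𝓞 K) M)) : M)
      = ∑ g : G, g • x := by
    rw [AddSubmonoidClass.coe_finset_sum]
    rfl
  apply Subtype.ext
  show ((∑ g : G, gInt K G M g ⟨x, hint⟩ : ↥(integralClosure (𝓞 K) M)) : M) = 1
  rw [h1, ← trace_eq_sum_smul K G M hbij, hx, map_one, map_one]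

theorem exists_int_multiple [Module.Finite K M] [Nontrivial M] (y : M) :
    ∃ c : 𝓞 K, c ≠ 0 ∧ IsIntegral (𝓞 K) (algebraMap (𝓞 K) M c * y) := by
  have halg : IsAlgebraic (𝓞 K) y := by
    haveI : Algebra.IsIntegral K M := Algebra.IsIntegral.of_finite K M
    have h1 : IsAlgebraic K y := (Algebra.IsIntegral.isIntegral (R := K) y).isAlgebraic
    exact (IsFractionRing.isAlgebraic_iff (𝓞 K) K M).mpr h1
  have hinj : ∀ c : 𝓞 K, algebraMap (𝓞 K) M c = 0 → c = 0 := by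
    intro c hc
    have h1 : algebraMap K M (algebraMap (𝓞 K) K c) = 0 := by
      rw [← IsScalarTower.algebraMap_apply]; exact hc
    have h2 : algebraMap (𝓞 K) K c = 0 :=
      (map_eq_zero_iff _ (algebraMap K M).injective).mp h1
    exact (map_eq_zero_iff _ (IsFractionRing.injective (𝓞 K) K)).mp h2
  obtain ⟨c, hc, hcy⟩ := IsAlgebraic.exists_integral_multiple halg
  exact ⟨c, hc, by rw [← Algebra.smul_def]; exact hcy⟩

theorem exists_dual_pair [Module.Finite K M] [Nontrivial M] [DecidableEq G]
    (hbij : Function.Bijective (galoisMap K G M)) :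
    ∃ (S : Finset (M × M)) (a : M × M → M) (b : M × M → M),
      (∀ p ∈ S, IsIntegral (𝓞 K) (b p)) ∧
      ∀ g : G, ∑ p ∈ S, a p * g • b p = (if g = 1 then 1 else 0) := by
  obtain ⟨w, hw⟩ := hbij.2 (fun g => if g = 1 then 1 else 0)
  obtain ⟨S, hS⟩ := TensorProduct.exists_finset w
  choose c hc0 hcint using fun y : M => exists_int_multiple K M y
  refine ⟨S, fun p => (algebraMap (𝓞 K) K (c p.2))⁻¹ • p.1,
    fun p => algebraMap (𝓞 K) M (c p.2) * p.2, fun p _ => hcint p.2, ?_⟩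
  intro g
  have hterm : ∀ p : M × M,
      ((algebraMap (𝓞 K) K (c p.2))⁻¹ • p.1) * g • (algebraMap (𝓞 K) M (c p.2) * p.2)
      = p.1 * g • p.2 := by
    intro p
    have hc : algebraMap (𝓞 K) M (c p.2) * p.2 = algebraMap (𝓞 K) K (c p.2) • p.2 := by
      rw [Algebra.smul_def, IsScalarTower.algebraMap_apply (𝓞 K) K M]
    have hne : algebraMap (𝓞 K) K (c p.2) ≠ 0 :=
      (map_ne_zero_iff _ (IsFractionRing.injective (𝓞 K) K)).mpr (hc0 p.2)
    rw [hc, smul_comm g, smul_mul_assoc, mul_smul_comm, smul_smul,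
      inv_mul_cancel₀ hne, one_smul]
  calc ∑ p ∈ S, ((algebraMap (𝓞 K) K (c p.2))⁻¹ • p.1) * g • (algebraMap (𝓞 K) M (c p.2) * p.2)
      = ∑ p ∈ S, p.1 * g • p.2 := Finset.sum_congr rfl (fun p _ => hterm p)
    _ = galoisMap K G M w g := by
        rw [hS, map_sum]
        simp [galoisMap_tmul]
    _ = _ := by rw [hw]

theorem finite_integralClosure [Module.Finite K M] [Nontrivial M]
    (hbij : Function.Bijective (galoisMap K G M)) :
    Module.Finite (𝓞 K) ↥(integralClosure (𝓞 K) M) := by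
  classical
  obtain ⟨S, a, b, hbint, hpair⟩ := exists_dual_pair K G M hbij
  set N : Submodule (𝓞 K) M := Submodule.span (𝓞 K) (Finset.image a S : Set M) with hN
  have hle : Subalgebra.toSubmodule (integralClosure (𝓞 K) M) ≤ N := by
    intro x hx
    have hxint : IsIntegral (𝓞 K) x := hx
    have hco : ∀ p ∈ S, ∃ t : 𝓞 K, algebraMap (𝓞 K) K t = Algebra.trace K M (b p * x) := by
      intro p hp
      have hint : IsIntegral (𝓞 K) (algebraMap K M (Algebra.trace K M (b p * x))) := by
        rw [trace_eq_sum_smul K G M hbij]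
        apply IsIntegral.sum
        intro g _
        have h1 : IsIntegral (𝓞 K) (b p * x) := (hbint p hp).mul hxint
        have h2 : g • (b p * x) = (MulSemiringAction.toAlgHom K M g) (b p * x) := rfl
        rw [h2]
        exact IsIntegral.map (MulSemiringAction.toAlgHom K M g) h1
      have hKint : IsIntegral (𝓞 K) (Algebra.trace K M (b p * x)) := by
        have hf : Function.Injective (IsScalarTower.toAlgHom (𝓞 K) K M) :=
          (algebraMap K M).injective
        exact (isIntegral_algHom_iff (IsScalarTower.toAlgHom (𝓞 K) K M) hf).mp hint
      exact IsIntegrallyClosed.isIntegral_iff.mp hKint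
    choose t ht using hco
    have key2 : ∑ p ∈ S, algebraMap K M (Algebra.trace K M (b p * x)) * a p = x := by
      have h1 : ∀ p ∈ S, algebraMap K M (Algebra.trace K M (b p * x)) * a p
          = ∑ g : G, a p * g • b p * g • x := by
        intro p _
        rw [trace_eq_sum_smul K G M hbij, Finset.sum_mul]
        refine Finset.sum_congr rfl (fun g _ => ?_)
        rw [smul_mul']
        ring
      rw [Finset.sum_congr rfl h1, Finset.sum_comm]
      have h2 : ∀ g : G, ∑ p ∈ S, a p * g • b p * g • x = (if g = 1 then 1 else 0) * g • x := by
        intro g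
        rw [← Finset.sum_mul, hpair g]
      rw [Finset.sum_congr rfl (fun g _ => h2 g)]
      simp only [ite_mul, one_mul, zero_mul]
      rw [Finset.sum_ite_eq' Finset.univ (1 : G) (fun g => g • x)]
      simp
    have hx2 : x = ∑ p ∈ S.attach, t p.1 p.2 • a p.1 := by
      have key3 : ∑ p ∈ S.attach, t p.1 p.2 • a p.1
          = ∑ p ∈ S.attach, algebraMap K M (Algebra.trace K M (b p.1 * x)) * a p.1 := by
        refine Finset.sum_congr rfl (fun p _ => ?_)
        rw [← ht p.1 p.2, ← IsScalarTower.algebraMap_apply (𝓞 K) K M, ← Algebra.smul_def]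
      rw [key3, Finset.sum_attach S (fun p => algebraMap K M (Algebra.trace K M (b p * x)) * a p),
        key2]
    rw [hx2]
    apply Submodule.sum_mem
    intro p _
    refine Submodule.smul_mem _ _ (Submodule.subset_span ?_)
    simp only [Finset.coe_image, Set.mem_image, Finset.mem_coe]
    exact ⟨p.1, p.2, rfl⟩
  have hfgN : N.FG := Submodule.fg_span (Set.toFinite _)
  haveI : IsNoetherian (𝓞 K) ↥N := isNoetherian_of_fg_of_noetherian N hfgN
  let P := Submodule.comap N.subtype (Subalgebra.toSubmodule (integralClosure (𝓞 K) M))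
  haveI : Module.Finite (𝓞 K) ↥P := Module.Finite.iff_fg.mpr (IsNoetherian.noetherian P)
  exact Module.Finite.equiv (Submodule.comapSubtypeEquivOfLe hle)

theorem noZeroSMul_integralClosure : NoZeroSMulDivisors (𝓞 K) ↥(integralClosure (𝓞 K) M) := by
  constructor
  intro c x h
  by_cases hc : c = 0
  · exact Or.inl hc
  · right
    have h2 : c • (x : M) = 0 := by
      have := congrArg (fun z : ↥(integralClosure (𝓞 K) M) => (z : M)) h
      simpa using this
    rw [← algebraMap_smul K c (x : M)] at h2
    have hk : algebraMap (𝓞 K) K c ≠ 0 :=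
      (map_ne_zero_iff _ (IsFractionRing.injective (𝓞 K) K)).mpr hc
    have h3 := congrArg (fun z => (algebraMap (𝓞 K) K c)⁻¹ • z) h2
    simp only [smul_smul, inv_mul_cancel₀ hk, one_smul, smul_zero] at h3
    exact Subtype.ext h3

/-- `gInt` as an `𝓞 K`-linear map. -/
noncomputable def gIntL (g : G) :
    ↥(integralClosure (𝓞 K) M) →ₗ[𝓞 K] ↥(integralClosure (𝓞 K) M) where
  toFun := gInt K G M g
  map_add' x y := by
    apply Subtype.ext
    show g • ((x : M) + (y : M)) = g • (x : M) + g • (y : M)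
    rw [smul_add]
  map_smul' c x := by
    apply Subtype.ext
    show g • (c • (x : M)) = c • (g • (x : M))
    rw [← algebraMap_smul K c (x : M), ← algebraMap_smul K c (g • (x : M)), smul_comm]

theorem gIntL_apply (g : G) (x : ↥(integralClosure (𝓞 K) M)) :
    gIntL K G M g x = gInt K G M g x := rfl

theorem gInt_gInt (g h : G) (x : ↥(integralClosure (𝓞 K) M)) :
    gInt K G M g (gInt K G M h x) = gInt K G M (g * h) x := by
  apply Subtype.ext
  show g • h • (x : M) = (g * h) • (x : M)
  rw [mul_smul]

theorem gInt_inv_gInt (g : G) (x : ↥(integralClosure (𝓞 K) M)) :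
    gInt K G M g⁻¹ (gInt K G M g x) = x := by
  apply Subtype.ext
  show g⁻¹ • g • (x : M) = (x : M)
  rw [inv_smul_smul]

theorem gInt_one (x : ↥(integralClosure (𝓞 K) M)) : gInt K G M 1 x = x := by
  apply Subtype.ext
  show (1 : G) • (x : M) = (x : M)
  rw [one_smul]

end OneAlgebra



section TwoAlgebras

variable (K : Type*) [Field K] [NumberField K]
variable (G : Type*) [CommGroup G] [Fintype G]
variable (M M' : Type*) [CommRing M] [CommRing M'] [Algebra K M] [Algebra K M']
  [MulSemiringAction G M] [SMulCommClass G K M]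
  [MulSemiringAction G M'] [SMulCommClass G K M']

/-- The natural map `O_M ⊗[O_K] O_M' → M ⊗[K] M'`. -/
noncomputable def PhiMap : (↥(integralClosure (𝓞 K) M) ⊗[𝓞 K] ↥(integralClosure (𝓞 K) M'))
    →ₗ[𝓞 K] TensorProduct K M M' :=
  haveI := IsLocalization.tensorProduct_compatibleSMul (nonZeroDivisors (𝓞 K)) K M M'
  (((TensorProduct.equivOfCompatibleSMul (𝓞 K) K K M M').symm.toLinearMap).restrictScalars (𝓞 K)) ∘ₗ
    (TensorProduct.map ((integralClosure (𝓞 K) M).val.toLinearMap)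
      ((integralClosure (𝓞 K) M').val.toLinearMap))

theorem PhiMap_tmul (x : ↥(integralClosure (𝓞 K) M)) (y : ↥(integralClosure (𝓞 K) M')) :
    PhiMap K M M' (x ⊗ₜ[𝓞 K] y) = (x : M) ⊗ₜ[K] (y : M') := by
  haveI := IsLocalization.tensorProduct_compatibleSMul (nonZeroDivisors (𝓞 K)) K M M'
  show (TensorProduct.equivOfCompatibleSMul (𝓞 K) K K M M').symm ((x : M) ⊗ₜ[𝓞 K] (y : M'))
      = (x : M) ⊗ₜ[K] (y : M')
  rw [LinearEquiv.symm_apply_eq]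
  rfl

theorem PhiMap_injective
    [Module.Flat (𝓞 K) ↥(integralClosure (𝓞 K) M)] [Module.Flat (𝓞 K) M'] :
    Function.Injective (PhiMap K M M') := by
  haveI := IsLocalization.tensorProduct_compatibleSMul (nonZeroDivisors (𝓞 K)) K M M'
  have h1 : Function.Injective (TensorProduct.map ((integralClosure (𝓞 K) M).val.toLinearMap)
      ((integralClosure (𝓞 K) M').val.toLinearMap)) := by
    have hmap : (TensorProduct.map ((integralClosure (𝓞 K) M).val.toLinearMap)
        ((integralClosure (𝓞 K) M').val.toLinearMap))
        = (LinearMap.rTensor M' ((integralClosure (𝓞 K) M).val.toLinearMap)) ∘ₗ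
          (LinearMap.lTensor (↥(integralClosure (𝓞 K) M))
            ((integralClosure (𝓞 K) M').val.toLinearMap)) := by
      apply TensorProduct.ext'
      intro x y
      rfl
    rw [hmap, LinearMap.coe_comp]
    exact (Module.Flat.rTensor_preserves_injective_linearMap _ Subtype.coe_injective).comp
      (Module.Flat.lTensor_preserves_injective_linearMap _ Subtype.coe_injective)
  have h2 : ⇑(PhiMap K M M')
      = ⇑((((TensorProduct.equivOfCompatibleSMul (𝓞 K) K K M M').symm.toLinearMap).restrictScalars
          (𝓞 K)))
        ∘ ⇑(TensorProduct.map ((integralClosure (𝓞 K) M).val.toLinearMap)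
          ((integralClosure (𝓞 K) M').val.toLinearMap)) := rfl
  rw [h2]
  exact ((TensorProduct.equivOfCompatibleSMul (𝓞 K) K K M M').symm.injective).comp h1

/-- The anti-diagonal action of `G` on `O_M ⊗ O_M'`. -/
noncomputable def sigmaMap (g : G) :
    (↥(integralClosure (𝓞 K) M) ⊗[𝓞 K] ↥(integralClosure (𝓞 K) M'))
    →ₗ[𝓞 K] (↥(integralClosure (𝓞 K) M) ⊗[𝓞 K] ↥(integralClosure (𝓞 K) M')) :=
  TensorProduct.map (gIntL K G M g) (gIntL K G M' g⁻¹)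

theorem sigmaMap_tmul (g : G) (x : ↥(integralClosure (𝓞 K) M))
    (y : ↥(integralClosure (𝓞 K) M')) :
    sigmaMap K G M M' g (x ⊗ₜ[𝓞 K] y) = (gInt K G M g x) ⊗ₜ[𝓞 K] (gInt K G M' g⁻¹ y) := rfl

/-- Multiplication by `x₀` on the left factor. -/
noncomputable def lamMap (x₀ : ↥(integralClosure (𝓞 K) M)) :
    (↥(integralClosure (𝓞 K) M) ⊗[𝓞 K] ↥(integralClosure (𝓞 K) M'))
    →ₗ[𝓞 K] (↥(integralClosure (𝓞 K) M) ⊗[𝓞 K] ↥(integralClosure (𝓞 K) M')) :=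
  LinearMap.rTensor _ (LinearMap.mulLeft (𝓞 K) x₀)

theorem lamMap_tmul (x₀ x : ↥(integralClosure (𝓞 K) M)) (y : ↥(integralClosure (𝓞 K) M')) :
    lamMap K M M' x₀ (x ⊗ₜ[𝓞 K] y) = (x₀ * x) ⊗ₜ[𝓞 K] y := rfl

theorem Phi_sigma (g : G)
    (t : ↥(integralClosure (𝓞 K) M) ⊗[𝓞 K] ↥(integralClosure (𝓞 K) M')) :
    PhiMap K M M' (sigmaMap K G M M' g t)
      = (Algebra.TensorProduct.map (MulSemiringAction.toAlgHom K M g)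
          (MulSemiringAction.toAlgHom K M' g⁻¹)) (PhiMap K M M' t) := by
  induction t using TensorProduct.induction_on with
  | zero => simp
  | tmul x y =>
      rw [sigmaMap_tmul, PhiMap_tmul, PhiMap_tmul, Algebra.TensorProduct.map_tmul]
      rfl
  | add s t hs ht => rw [map_add, map_add, hs, ht, map_add, ← map_add]

theorem sigma_sigma (g h : G)
    (t : ↥(integralClosure (𝓞 K) M) ⊗[𝓞 K] ↥(integralClosure (𝓞 K) M')) :
    sigmaMap K G M M' g (sigmaMap K G M M' h t) = sigmaMap K G M M' (g * h) t := by
  induction t using TensorProduct.induction_on with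
  | zero => simp
  | tmul x y =>
      rw [sigmaMap_tmul, sigmaMap_tmul, sigmaMap_tmul, gInt_gInt, gInt_gInt]
      congr 1
      rw [mul_inv_rev, mul_comm]
  | add s t hs ht => rw [map_add, map_add, hs, ht, ← map_add]

theorem Phi_integral
    (t : ↥(integralClosure (𝓞 K) M) ⊗[𝓞 K] ↥(integralClosure (𝓞 K) M')) :
    IsIntegral (𝓞 K) (PhiMap K M M' t) := by
  induction t using TensorProduct.induction_on with
  | zero => rw [map_zero]; exact isIntegral_zero
  | tmul x y =>
      rw [PhiMap_tmul]
      have h1 : (x : M) ⊗ₜ[K] (y : M')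
          = ((x : M) ⊗ₜ[K] (1 : M')) * ((1 : M) ⊗ₜ[K] (y : M')) := by
        rw [Algebra.TensorProduct.tmul_mul_tmul, mul_one, one_mul]
      rw [h1]
      have h2 : IsIntegral (𝓞 K) ((x : M) ⊗ₜ[K] (1 : M')) := by
        have := IsIntegral.map
          ((Algebra.TensorProduct.includeLeft :
            M →ₐ[K] TensorProduct K M M')) x.2
        exact this
      have h3 : IsIntegral (𝓞 K) ((1 : M) ⊗ₜ[K] (y : M')) := by
        have := IsIntegral.map
          ((Algebra.TensorProduct.includeRight :
            M' →ₐ[K] TensorProduct K M M')) y.2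
        exact this
      exact h2.mul h3
  | add s t hs ht => rw [map_add]; exact hs.add ht

theorem Phi_sigma_lam (x₀ : ↥(integralClosure (𝓞 K) M)) (g : G)
    (t : ↥(integralClosure (𝓞 K) M) ⊗[𝓞 K] ↥(integralClosure (𝓞 K) M')) :
    PhiMap K M M' (sigmaMap K G M M' g (lamMap K M M' x₀ t))
      = ((g • (x₀ : M)) ⊗ₜ[K] (1 : M')) * PhiMap K M M' (sigmaMap K G M M' g t) := by
  induction t using TensorProduct.induction_on with
  | zero => simp
  | tmul x y =>
      rw [lamMap_tmul, sigmaMap_tmul, sigmaMap_tmul, PhiMap_tmul, PhiMap_tmul,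
        Algebra.TensorProduct.tmul_mul_tmul, one_mul]
      congr 1
      show g • ((x₀ : M) * (x : M)) = g • (x₀ : M) * g • (x : M)
      rw [smul_mul']
  | add s t hs ht =>
      simp only [map_add, hs, ht, mul_add]

theorem sigma_lam_sum (x₀ : ↥(integralClosure (𝓞 K) M))
    (hx₀ : ∑ g : G, gInt K G M g x₀ = 1)
    (t : ↥(integralClosure (𝓞 K) M) ⊗[𝓞 K] ↥(integralClosure (𝓞 K) M')) :
    ∑ g : G, sigmaMap K G M M' g (lamMap K M M' x₀ (sigmaMap K G M M' g⁻¹ t)) = t := by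
  induction t using TensorProduct.induction_on with
  | zero => simp
  | tmul x y =>
      have hterm : ∀ g : G, sigmaMap K G M M' g (lamMap K M M' x₀
          (sigmaMap K G M M' g⁻¹ (x ⊗ₜ[𝓞 K] y)))
          = (gInt K G M g x₀ * x) ⊗ₜ[𝓞 K] y := by
        intro g
        rw [sigmaMap_tmul, lamMap_tmul, sigmaMap_tmul]
        congr 1
        · apply Subtype.ext
          show g • ((x₀ : M) * (g⁻¹ • (x : M))) = g • (x₀ : M) * (x : M)
          rw [smul_mul', smul_inv_smul]
        · rw [inv_inv]
          exact gInt_inv_gInt K G M' g y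
      rw [Finset.sum_congr rfl (fun g _ => hterm g), ← TensorProduct.sum_tmul,
        ← Finset.sum_mul, hx₀, one_mul]
  | add s t hs ht =>
      simp only [map_add]
      rw [Finset.sum_add_distrib, hs, ht]

end TwoAlgebras

/-- let M, M' be tame G-Galois algebra extensions of a number field K
(G finite abelian), arithmetically disjoint over K.  Then
pic(M * M') = pic(M) · pic(M') in Pic(O_K[G]); concretely, with
M * M' = (M ⊗_K M')^D (D the anti-diagonal), there is an isomorphism
O_{M*M'} ≅ O_M ⊗_{O_K[G]} O_M' = (O_M ⊗_{O_K} O_M')/J (J generated by the elements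
g·x ⊗ y − x ⊗ g·y) which is O_K-linear and G-equivariant. -/
theorem stmt_12 (K : Type*) [Field K] [NumberField K]
    (G : Type*) [CommGroup G] [Fintype G]
    (M M' : Type*) [CommRing M] [CommRing M'] [Algebra K M] [Algebra K M']
    [MulSemiringAction G M] [SMulCommClass G K M] [Module.Finite K M]
    [MulSemiringAction G M'] [SMulCommClass G K M'] [Module.Finite K M']
    (hgal : IsGaloisAlgebra K G M) (hgal' : IsGaloisAlgebra K G M')
    (htame : IsTameGalgebra K M) (htame' : IsTameGalgebra K M')
    -- the O_K-module O_M ⊗_{O_K} O_M', and the submodule J of relations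
    -- g•x ⊗ y − x ⊗ g•y :
    (J : Submodule (𝓞 K)
      (TensorProduct (𝓞 K) ↥(integralClosure (𝓞 K) M) ↥(integralClosure (𝓞 K) M')))
    (hJ : J = Submodule.span (𝓞 K)
      {t | ∃ (g : G) (x : ↥(integralClosure (𝓞 K) M)) (y : ↥(integralClosure (𝓞 K) M')),
        t = (gInt K G M g x) ⊗ₜ[𝓞 K] y - x ⊗ₜ[𝓞 K] (gInt K G M' g y)})
    -- O_{M*M'} : the integral elements of (M ⊗_K M') fixed by the anti-diagonal D
    (oStar : Submodule (𝓞 K) (TensorProduct K M M'))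
    (hoStar : ∀ z : TensorProduct K M M', z ∈ oStar ↔
      ((∀ g : G, (Algebra.TensorProduct.map (MulSemiringAction.toAlgHom K M g)
          (MulSemiringAction.toAlgHom K M' g⁻¹)) z = z) ∧ IsIntegral (𝓞 K) z))
    -- arithmetic disjointness: O_{M ⊗ M'} = O_M ⊗_{O_K} O_M'
    (harith : ∀ z : TensorProduct K M M', IsIntegral (𝓞 K) z →
      z ∈ Submodule.span (𝓞 K)
        {t : TensorProduct K M M' | ∃ (x : M) (y : M'),
          IsIntegral (𝓞 K) x ∧ IsIntegral (𝓞 K) y ∧ t = x ⊗ₜ[K] y})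
    -- the G-action on (O_M ⊗_{O_K} O_M')/J, through the first factor
    (ρbar : G → ((TensorProduct (𝓞 K) ↥(integralClosure (𝓞 K) M)
        ↥(integralClosure (𝓞 K) M')) ⧸ J) →ₗ[𝓞 K]
      ((TensorProduct (𝓞 K) ↥(integralClosure (𝓞 K) M)
        ↥(integralClosure (𝓞 K) M')) ⧸ J))
    (hρbar : ∀ (g : G) x y, ρbar g (Submodule.Quotient.mk (x ⊗ₜ[𝓞 K] y)) =
      Submodule.Quotient.mk ((gInt K G M g x) ⊗ₜ[𝓞 K] y)) :
    -- conclusion: pic(M*M') = pic(M)·pic(M')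
    ∃ e : ↥oStar ≃ₗ[𝓞 K]
        ((TensorProduct (𝓞 K) ↥(integralClosure (𝓞 K) M)
          ↥(integralClosure (𝓞 K) M')) ⧸ J),
      ∀ (g : G) (z w : ↥oStar),
        (w : TensorProduct K M M') =
          (Algebra.TensorProduct.map (MulSemiringAction.toAlgHom K M g)
            (AlgHom.id K M')) (z : TensorProduct K M M') →
        e w = ρbar g (e z) := by
  classical
  haveI hntM : Nontrivial M := nontrivial_of_tame K M htame
  haveI hntM' : Nontrivial M' := nontrivial_of_tame K M' htame'
  haveI := finite_integralClosure K G M hgal.2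
  haveI := finite_integralClosure K G M' hgal'.2
  haveI := noZeroSMul_integralClosure K M
  haveI := noZeroSMul_integralClosure K M'
  haveI hflatM : Module.Flat (𝓞 K) ↥(integralClosure (𝓞 K) M) :=
    flat_of_dedekind (RingOfIntegers.not_isField K)
  haveI hflatK : Module.Flat (𝓞 K) K := IsLocalization.flat K (nonZeroDivisors (𝓞 K))
  haveI hflatM' : Module.Flat (𝓞 K) M' := Module.Flat.trans (𝓞 K) K M'
  obtain ⟨x₀, hx₀⟩ := exists_x0 K G M hgal.2 htame
  set Nmap := ∑ g : G, sigmaMap K G M M' g with hNmap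
  set nn : (↥(integralClosure (𝓞 K) M) ⊗[𝓞 K] ↥(integralClosure (𝓞 K) M'))
      →ₗ[𝓞 K] TensorProduct K M M' := (PhiMap K M M') ∘ₗ Nmap with hnn
  have hNapply : ∀ t, Nmap t = ∑ g : G, sigmaMap K G M M' g t := by
    intro t
    rw [hNmap, LinearMap.coe_sum, Finset.sum_apply]
  have hnn_apply : ∀ t, nn t = ∑ g : G, PhiMap K M M' (sigmaMap K G M M' g t) := by
    intro t
    show PhiMap K M M' (Nmap t) = _
    rw [hNapply, map_sum]
  -- D-invariance of the image of nn
  have hfix : ∀ (g : G) t, (Algebra.TensorProduct.map (MulSemiringAction.toAlgHom K M g)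
      (MulSemiringAction.toAlgHom K M' g⁻¹)) (nn t) = nn t := by
    intro g t
    rw [hnn_apply, map_sum]
    calc ∑ h : G, (Algebra.TensorProduct.map (MulSemiringAction.toAlgHom K M g)
            (MulSemiringAction.toAlgHom K M' g⁻¹)) (PhiMap K M M' (sigmaMap K G M M' h t))
        = ∑ h : G, PhiMap K M M' (sigmaMap K G M M' (g * h) t) := by
          refine Finset.sum_congr rfl (fun h _ => ?_)
          rw [← Phi_sigma, sigma_sigma]
      _ = ∑ h : G, PhiMap K M M' (sigmaMap K G M M' h t) := by
          refine Fintype.sum_equiv (Equiv.mulLeft g) _ _ (fun h => ?_)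
          rw [Equiv.coe_mulLeft]
  have hmem : ∀ t, nn t ∈ oStar := by
    intro t
    refine (hoStar (nn t)).mpr ⟨fun g => hfix g t, ?_⟩
    show IsIntegral (𝓞 K) (PhiMap K M M' (Nmap t))
    exact Phi_integral K M M' (Nmap t)
  set nnBar := LinearMap.codRestrict oStar nn hmem with hnnBar
  have hnn_sigma : ∀ (g : G) t, nn (sigmaMap K G M M' g t) = nn t := by
    intro g t
    rw [hnn_apply, hnn_apply]
    calc ∑ h : G, PhiMap K M M' (sigmaMap K G M M' h (sigmaMap K G M M' g t))
        = ∑ h : G, PhiMap K M M' (sigmaMap K G M M' (h * g) t) := by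
          refine Finset.sum_congr rfl (fun h _ => ?_)
          rw [sigma_sigma]
      _ = ∑ h : G, PhiMap K M M' (sigmaMap K G M M' h t) := by
          refine Fintype.sum_equiv (Equiv.mulRight g) _ _ (fun h => ?_)
          rw [Equiv.coe_mulRight]
  have hgg' : ∀ (g : G) (y : ↥(integralClosure (𝓞 K) M')),
      gInt K G M' g (gInt K G M' g⁻¹ y) = y := by
    intro g y
    have := gInt_inv_gInt K G M' g⁻¹ y
    rwa [inv_inv] at this
  have hker : J ≤ LinearMap.ker nnBar := by
    rw [hJ, Submodule.span_le]
    rintro _ ⟨g, x, y, rfl⟩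
    rw [SetLike.mem_coe, LinearMap.mem_ker]
    apply Subtype.ext
    show nn ((gInt K G M g x) ⊗ₜ[𝓞 K] y - x ⊗ₜ[𝓞 K] (gInt K G M' g y)) = 0
    rw [map_sub]
    have h1 : (gInt K G M g x) ⊗ₜ[𝓞 K] y
        = sigmaMap K G M M' g (x ⊗ₜ[𝓞 K] (gInt K G M' g y)) := by
      rw [sigmaMap_tmul, gInt_inv_gInt]
    rw [h1, hnn_sigma, sub_self]
  set nbar := J.liftQ nnBar hker with hnbar
  have hnbar_mk : ∀ t, nbar (Submodule.Quotient.mk t) = nnBar t := by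
    intro t
    rw [hnbar, Submodule.liftQ_apply]
  have hnbar_coe : ∀ t, ((nbar (Submodule.Quotient.mk t) : ↥oStar) : TensorProduct K M M')
      = nn t := by
    intro t
    rw [hnbar_mk]
    rfl
  -- the mk identity
  have hsig : ∀ (g : G) s, Submodule.Quotient.mk (p := J) (sigmaMap K G M M' g s)
      = Submodule.Quotient.mk (p := J) s := by
    intro g s
    induction s using TensorProduct.induction_on with
    | zero => rw [map_zero]
    | tmul x y =>
        rw [sigmaMap_tmul, Submodule.Quotient.eq, hJ]
        apply Submodule.subset_span
        refine ⟨g, x, gInt K G M' g⁻¹ y, ?_⟩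
        rw [hgg' g y]
    | add s t hs ht =>
        rw [map_add, Submodule.Quotient.mk_add, Submodule.Quotient.mk_add, hs, ht]
  have hmk : ∀ t, Submodule.Quotient.mk (p := J) t
      = Submodule.Quotient.mk (p := J) (lamMap K M M' x₀ (Nmap t)) := by
    intro t
    calc Submodule.Quotient.mk (p := J) t
        = Submodule.Quotient.mk (p := J)
            (∑ g : G, sigmaMap K G M M' g (lamMap K M M' x₀ (sigmaMap K G M M' g⁻¹ t))) := by
          rw [sigma_lam_sum K G M M' x₀ hx₀ t]
      _ = ∑ g : G, Submodule.Quotient.mk (p := J)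
            (sigmaMap K G M M' g (lamMap K M M' x₀ (sigmaMap K G M M' g⁻¹ t))) := by
          rw [← Submodule.mkQ_apply, map_sum]
          rfl
      _ = ∑ g : G, Submodule.Quotient.mk (p := J)
            (lamMap K M M' x₀ (sigmaMap K G M M' g⁻¹ t)) := by
          refine Finset.sum_congr rfl (fun g _ => ?_)
          rw [hsig]
      _ = Submodule.Quotient.mk (p := J)
            (lamMap K M M' x₀ (∑ g : G, sigmaMap K G M M' g⁻¹ t)) := by
          rw [map_sum, ← Submodule.mkQ_apply, map_sum]
          rfl
      _ = Submodule.Quotient.mk (p := J) (lamMap K M M' x₀ (Nmap t)) := by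
          have hre : ∑ g : G, sigmaMap K G M M' g⁻¹ t = ∑ g : G, sigmaMap K G M M' g t :=
            Fintype.sum_equiv (Equiv.inv G) _ _ (fun g => by rw [Equiv.inv_apply])
          rw [hre, ← hNapply]
  -- injectivity
  have hinj : Function.Injective nbar := by
    intro u v huv
    have hsub : nbar (u - v) = 0 := by rw [map_sub, huv, sub_self]
    obtain ⟨t, ht⟩ := Submodule.Quotient.mk_surjective J (u - v)
    have h0 : nnBar t = 0 := by
      rw [← hnbar_mk, ht, hsub]
    have h1 : nn t = 0 := congrArg Subtype.val h0
    have h2 : Nmap t = 0 := by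
      apply PhiMap_injective K M M'
      rw [map_zero]
      exact h1
    have h3 : u - v = 0 := by
      rw [← ht, hmk t, h2, map_zero]
      rfl
    have := sub_eq_zero.mp h3
    exact this
  -- surjectivity
  have hsurj : Function.Surjective nbar := by
    intro z
    obtain ⟨hzfix, hzint⟩ := (hoStar (z : TensorProduct K M M')).mp z.2
    have hrange : (z : TensorProduct K M M') ∈ LinearMap.range (PhiMap K M M') := by
      refine Submodule.span_le.mpr ?_ (harith _ hzint)
      rintro _ ⟨x, y, hx, hy, rfl⟩
      exact ⟨(⟨x, hx⟩ : ↥(integralClosure (𝓞 K) M)) ⊗ₜ[𝓞 K]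
        (⟨y, hy⟩ : ↥(integralClosure (𝓞 K) M')), PhiMap_tmul K M M' _ _⟩
    obtain ⟨t, ht⟩ := hrange
    refine ⟨Submodule.Quotient.mk (lamMap K M M' x₀ t), ?_⟩
    apply Subtype.ext
    rw [hnbar_coe, hnn_apply]
    have hsum : ∑ g : G, g • (x₀ : M) = 1 := by
      have h5 := congrArg (fun z : ↥(integralClosure (𝓞 K) M) => (z : M)) hx₀
      rw [AddSubmonoidClass.coe_finset_sum] at h5
      exact h5
    calc ∑ g : G, PhiMap K M M' (sigmaMap K G M M' g (lamMap K M M' x₀ t))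
        = ∑ g : G, ((g • (x₀ : M)) ⊗ₜ[K] (1 : M')) * PhiMap K M M' (sigmaMap K G M M' g t) := by
          refine Finset.sum_congr rfl (fun g _ => ?_)
          rw [Phi_sigma_lam]
      _ = ∑ g : G, ((g • (x₀ : M)) ⊗ₜ[K] (1 : M')) * (z : TensorProduct K M M') := by
          refine Finset.sum_congr rfl (fun g _ => ?_)
          rw [Phi_sigma, ht, hzfix g]
      _ = ((∑ g : G, g • (x₀ : M)) ⊗ₜ[K] (1 : M')) * (z : TensorProduct K M M') := by
          rw [TensorProduct.sum_tmul, Finset.sum_mul]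
      _ = (z : TensorProduct K M M') := by
          rw [hsum, ← Algebra.TensorProduct.one_def, one_mul]
  set eq := LinearEquiv.ofBijective nbar ⟨hinj, hsurj⟩ with heq
  have heq_apply : ∀ u, eq u = nbar u := fun u => rfl
  -- equivariance key
  have hkey : ∀ (g : G) (u : (TensorProduct (𝓞 K) ↥(integralClosure (𝓞 K) M)
      ↥(integralClosure (𝓞 K) M')) ⧸ J),
      ((nbar (ρbar g u) : ↥oStar) : TensorProduct K M M')
      = (Algebra.TensorProduct.map (MulSemiringAction.toAlgHom K M g) (AlgHom.id K M'))
          ((nbar u : ↥oStar) : TensorProduct K M M') := by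
    intro g u
    obtain ⟨t, rfl⟩ := Submodule.Quotient.mk_surjective J u
    induction t using TensorProduct.induction_on with
    | zero =>
        rw [Submodule.Quotient.mk_zero, map_zero, map_zero]
        simp
    | tmul x y =>
        rw [hρbar g x y, hnbar_coe, hnbar_coe, hnn_apply, hnn_apply, map_sum]
        refine Finset.sum_congr rfl (fun h _ => ?_)
        rw [sigmaMap_tmul, sigmaMap_tmul, PhiMap_tmul, PhiMap_tmul,
          Algebra.TensorProduct.map_tmul]
        congr 1
        show h • g • (x : M) = g • h • (x : M)
        rw [smul_smul, smul_smul, mul_comm]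
    | add s t hs ht =>
        rw [Submodule.Quotient.mk_add, map_add, map_add, map_add, Submodule.coe_add,
          Submodule.coe_add, hs, ht, map_add]
  refine ⟨eq.symm, ?_⟩
  intro g z w hw
  rw [LinearEquiv.symm_apply_eq]
  apply Subtype.ext
  show (w : TensorProduct K M M') = ((eq (ρbar g (eq.symm z)) : ↥oStar) : TensorProduct K M M')
  rw [heq_apply, hkey g (eq.symm z)]
  have h6 : nbar (eq.symm z) = z := by
    have := eq.apply_symm_apply z
    rw [heq_apply] at this
    exact this
  rw [h6, hw]
end

section
/- Let G be a finite abelian group of odd order, U ≤ G a subgroup, and consider the complex of abelian groups G → G^{(2)} → G^{(3)}, where G^{(2)} = (G × G)/{(z, z⁻¹) : z ∈ U}, G^{(3)} = (G × G × G)/(analogous relations over U), the first map sends x to the class of (x, x⁻¹), and the second map sends the class of (x, y) to the class of (x, y, 1)·(x⁻¹, 1, y⁻¹)·(1, x, y). Then this complex is exact at the middle term. -/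
open Subgroup

/-- for a finite abelian group G of odd order and a subgroup U,
the complex G → G⁽²⁾ → G⁽³⁾ (with G⁽²⁾ = (G×G)/⟨(z,z⁻¹) : z ∈ U⟩,
G⁽³⁾ = (G×G×G)/⟨(z,z⁻¹,1),(1,z,z⁻¹) : z ∈ U⟩, first map x ↦ (x,x⁻¹),
second map (x,y) ↦ (x,y,1)(x⁻¹,1,y⁻¹)(1,x,y)) is exact at the middle term. -/
theorem stmt_14 (G : Type*) [CommGroup G] [Fintype G] (hodd : Odd (Fintype.card G))
    (U : Subgroup G)
    (D2 : Subgroup (G × G)) (hD2 : D2 = Subgroup.closure {p | ∃ z ∈ U, p = (z, z⁻¹)})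
    (D3 : Subgroup (G × G × G))
    (hD3 : D3 = Subgroup.closure
        ({p | ∃ z ∈ U, p = (z, z⁻¹, 1)} ∪ {p | ∃ z ∈ U, p = (1, z, z⁻¹)}))
    (d2 : (G × G) ⧸ D2 →* (G × G × G) ⧸ D3)
    (hd2 : ∀ x y : G, d2 (QuotientGroup.mk (x, y)) =
        QuotientGroup.mk ((x, y, 1) * (x⁻¹, 1, y⁻¹) * (1, x, y))) :
    (∀ x : G, d2 (QuotientGroup.mk (x, x⁻¹)) = 1) ∧
    (∀ a : (G × G) ⧸ D2, d2 a = 1 → ∃ x : G, a = QuotientGroup.mk (x, x⁻¹)) := by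
  -- the product simplifies to (1, y*x, 1)
  have hprod : ∀ x y : G, ((x, y, 1) * (x⁻¹, 1, y⁻¹) * (1, x, y) : G × G × G)
      = (1, y * x, 1) := by
    intro x y
    ext <;> simp [mul_assoc]
  -- a homomorphism killing D3
  let ψ : G × G × G →* G :=
    MonoidHom.mk' (fun p => p.1 * p.2.1 * p.2.2) (by
      intro a b
      dsimp
      ac_rfl)
  have hker : ∀ c : G, (1, c, 1) ∈ D3 → c = 1 := by
    intro c hc
    have hle : D3 ≤ ψ.ker := by
      rw [hD3]
      apply Subgroup.closure_le _ |>.2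
      rintro p (⟨z, hz, rfl⟩ | ⟨z, hz, rfl⟩) <;>
        simp [ψ, MonoidHom.mem_ker]
    have := hle hc
    simpa [ψ, MonoidHom.mem_ker] using this
  constructor
  · intro x
    rw [hd2, hprod]
    simp
    exact D3.one_mem
  · intro a ha
    obtain ⟨⟨x, y⟩, rfl⟩ := QuotientGroup.mk_surjective a
    refine ⟨x, ?_⟩
    rw [hd2, hprod] at ha
    have hmem : ((1, y * x, 1) : G × G × G) ∈ D3 :=
      (QuotientGroup.eq_one_iff _).1 ha
    have hyx : y * x = 1 := hker _ hmem
    have : y = x⁻¹ := eq_inv_of_mul_eq_one_left hyx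
    rw [this]
end

section
/- Let K be a totally real number field and Γ an abelian group of odd order. Then the subgroup (O_K[Γ]^×)^{1−j} of the unit group of the group ring, where j is the involution induced by inversion on Γ, is contained in ±Γ. -/
open NumberField

/-- A number field is totally real if every complex embedding has real image. -/
def IsTotallyRealNF (K : Type*) [Field K] [NumberField K] : Prop :=
  ∀ φ : K →+* ℂ, ∀ x : K, (φ x).im = 0

/-- Key arithmetic lemma: an algebraic integer in a totally real field all of whose
embeddings have absolute value at most 1 is `0` or `±1` (so its square is `0` or `1`). -/
lemma aux_zero_or_sq_one (K : Type*) [Field K] [NumberField K] (hK : IsTotallyRealNF K)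
    (a : 𝓞 K) (ha : ∀ φ : K →+* ℂ, ‖φ (a : K)‖ ≤ 1) : a = 0 ∨ a * a = 1 := by
  classical
  by_cases h0 : a = 0
  · exact Or.inl h0
  right
  have hKa : (a : K) ≠ 0 := by
    simpa using (RingOfIntegers.coe_eq_zero_iff (K := K)).not.mpr h0
  -- the norm of `a` is a nonzero rational integer
  have hint : IsIntegral ℤ (Algebra.norm ℚ (a : K)) :=
    Algebra.isIntegral_norm ℚ (RingOfIntegers.isIntegral_coe a)
  obtain ⟨n, hn⟩ := IsIntegrallyClosed.isIntegral_iff.mp hint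
  have hNne : Algebra.norm ℚ (a : K) ≠ 0 := by
    simpa using (Algebra.norm_ne_zero_iff (R := ℚ) (S := K)).mpr hKa
  have hnne : n ≠ 0 := by
    rintro rfl; exact hNne (by simpa using hn.symm)
  have h1n : (1 : ℝ) ≤ |(n : ℝ)| := by
    have : (1 : ℤ) ≤ |n| := Int.one_le_abs hnne
    calc (1:ℝ) ≤ (|n| : ℤ) := by exact_mod_cast this
    _ = |(n : ℝ)| := by push_cast; simp
  -- product formula
  have hprod : ‖algebraMap ℚ ℂ (Algebra.norm ℚ (a : K))‖ = ∏ σ : K →ₐ[ℚ] ℂ, ‖σ (a : K)‖ := by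
    rw [Algebra.norm_eq_prod_embeddings ℚ ℂ (a : K)]
    exact norm_prod _ _
  have hnormval : ‖algebraMap ℚ ℂ (Algebra.norm ℚ (a : K))‖ = |(n : ℝ)| := by
    rw [← hn]
    simp [Complex.norm_ratCast]
  -- each embedding has absolute value exactly 1
  have hone : ∀ σ : K →ₐ[ℚ] ℂ, ‖σ (a : K)‖ = 1 := by
    intro σ
    have hle : ‖σ (a : K)‖ ≤ 1 := ha σ.toRingHom
    have hge : (1 : ℝ) ≤ ‖σ (a : K)‖ := by
      have hrest : ∏ τ ∈ Finset.univ.erase σ, ‖τ (a : K)‖ ≤ 1 :=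
        Finset.prod_le_one (fun τ _ => norm_nonneg _) (fun τ _ => ha τ.toRingHom)
      have h1 : (1:ℝ) ≤ ∏ τ : K →ₐ[ℚ] ℂ, ‖τ (a : K)‖ := by
        rw [← hprod, hnormval]; exact h1n
      have hsplit : ∏ τ : K →ₐ[ℚ] ℂ, ‖τ (a : K)‖
          = ‖σ (a : K)‖ * ∏ τ ∈ Finset.univ.erase σ, ‖τ (a : K)‖ :=
        (Finset.mul_prod_erase _ _ (Finset.mem_univ σ)).symm
      nlinarith [norm_nonneg (σ (a : K))]
    linarith
  -- get one embedding
  have hnonempty : Nonempty (K →+* ℂ) := by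
    have h := NumberField.Embeddings.card K ℂ
    have : 0 < Fintype.card (K →+* ℂ) := by rw [h]; exact Module.finrank_pos
    exact Fintype.card_pos_iff.mp this
  obtain ⟨φ⟩ := hnonempty
  set σ : K →ₐ[ℚ] ℂ := RingHom.equivRatAlgHom K ℂ φ with hσ
  have him : (σ (a : K)).im = 0 := hK σ.toRingHom (a : K)
  have hsq : σ ((a : K) * (a : K)) = 1 := by
    rw [map_mul]
    have hz : σ (a : K) = ((σ (a : K)).re : ℂ) := Complex.ext rfl (by simp [him])
    have habs : |(σ (a : K)).re| = 1 := by
      have := hone σ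
      rwa [hz, Complex.norm_real, Real.norm_eq_abs] at this
    rcases abs_eq (by norm_num : (0:ℝ) ≤ 1) |>.mp habs with h | h
    · rw [hz, h]; norm_num
    · rw [hz, h]; norm_num
  have hK2 : (a : K) * (a : K) = 1 := by
    apply RingHom.injective σ.toRingHom
    simpa using hsq
  have : ((a * a : 𝓞 K) : K) = ((1 : 𝓞 K) : K) := by push_cast; exact hK2
  exact RingOfIntegers.coe_injective this

/-- Lenstra: for K a totally real number field and Γ an abelian group of
odd order, every unit of O_K[Γ] of the form u^{1-j} = u · j(u)⁻¹, where j is the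
involution induced by γ ↦ γ⁻¹, is of the form ±γ for some γ ∈ Γ. -/
theorem stmt_15 (K : Type*) [Field K] [NumberField K] (hK : IsTotallyRealNF K)
    (Γ : Type*) [CommGroup Γ] [Fintype Γ] (hΓ : Odd (Fintype.card Γ))
    (j : MonoidAlgebra (𝓞 K) Γ ≃ₐ[𝓞 K] MonoidAlgebra (𝓞 K) Γ)
    (hj : j = MonoidAlgebra.domCongr (𝓞 K) (𝓞 K) (MulEquiv.inv Γ))
    (u : (MonoidAlgebra (𝓞 K) Γ)ˣ) :
    ∃ γ : Γ, (u : MonoidAlgebra (𝓞 K) Γ) * j (((u⁻¹ : _ˣ) : MonoidAlgebra (𝓞 K) Γ))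
        = MonoidAlgebra.single γ 1
      ∨ (u : MonoidAlgebra (𝓞 K) Γ) * j (((u⁻¹ : _ˣ) : MonoidAlgebra (𝓞 K) Γ))
        = - MonoidAlgebra.single γ 1 := by
  classical
  set v : MonoidAlgebra (𝓞 K) Γ :=
    (u : MonoidAlgebra (𝓞 K) Γ) * j (((u⁻¹ : _ˣ) : MonoidAlgebra (𝓞 K) Γ)) with hv
  -- j is an involution
  have hjj : ∀ x : MonoidAlgebra (𝓞 K) Γ, j (j x) = x := by
    subst hj
    intro x
    ext g
    simp
  have hjapp : ∀ (x : MonoidAlgebra (𝓞 K) Γ) (g : Γ), (j x).coeff g = x.coeff g⁻¹ := by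
    subst hj
    intro x g
    simp
  -- v * j v = 1
  have hvj : v * j v = 1 := by
    have h1 : v * j v = ((u : MonoidAlgebra (𝓞 K) Γ) * ((u⁻¹ : _ˣ) : MonoidAlgebra (𝓞 K) Γ))
        * (j (((u⁻¹ : _ˣ) : MonoidAlgebra (𝓞 K) Γ)) * j ((u : MonoidAlgebra (𝓞 K) Γ))) := by
      rw [hv, map_mul, hjj]
      ring
    rw [h1, ← map_mul, Units.mul_inv, Units.inv_mul, map_one, one_mul]
  -- extract the coefficient at 1 : ∑ δ, (v.coeff δ)² = 1
  have hsum : ∑ δ : Γ, v.coeff δ * v.coeff δ = 1 := by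
    have h1 : (v * j v).coeff 1 = 1 := by
      rw [hvj, MonoidAlgebra.one_def, MonoidAlgebra.coeff_single, Finsupp.single_apply]
      simp
    have hs : ∀ {p : Γ × Γ},
        p ∈ Finset.univ.map ⟨fun δ : Γ => (δ, δ⁻¹), show Function.Injective (fun δ : Γ => (δ, δ⁻¹)) from fun a b h => by
          simpa using congrArg Prod.fst h⟩ ↔ p.1 * p.2 = 1 := by
      intro p
      simp only [Finset.mem_map, Finset.mem_univ, Function.Embedding.coeFn_mk, true_and]
      constructor
      · rintro ⟨δ, rfl⟩; simp
      · intro hp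
        exact ⟨p.1, Prod.ext rfl (eq_inv_of_mul_eq_one_right hp).symm⟩
    rw [MonoidAlgebra.coeff_mul_antidiag v (j v) 1 _ hs, Finset.sum_map] at h1
    simpa [hjapp] using h1
  -- every coefficient is 0 or has square 1
  have hcoef : ∀ δ : Γ, v.coeff δ = 0 ∨ v.coeff δ * v.coeff δ = 1 := by
    intro δ
    apply aux_zero_or_sq_one K hK
    intro φ
    set ψ : 𝓞 K →+* ℂ := φ.comp (algebraMap (𝓞 K) K) with hψ
    have him : ∀ x : 𝓞 K, (ψ x).im = 0 := fun x => hK φ _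
    have hz : ∀ x : 𝓞 K, ψ x = (((ψ x).re : ℝ) : ℂ) := fun x => Complex.ext rfl (by simp [him x])
    have hterm : ∀ ε : Γ, ψ (v.coeff ε * v.coeff ε) = (((ψ (v.coeff ε)).re * (ψ (v.coeff ε)).re : ℝ) : ℂ) := by
      intro ε
      rw [map_mul]
      conv_lhs => rw [hz (v.coeff ε)]
      rw [← Complex.ofReal_mul]
    have hsum' : ∑ ε : Γ, (ψ (v.coeff ε)).re * (ψ (v.coeff ε)).re = 1 := by
      have hψsum := congrArg ψ hsum
      rw [map_sum, map_one] at hψsum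
      have h3 : ((∑ ε : Γ, ((ψ (v.coeff ε)).re * (ψ (v.coeff ε)).re) : ℝ) : ℂ)
          = ∑ ε : Γ, ψ (v.coeff ε * v.coeff ε) := by
        rw [show ((∑ ε : Γ, ((ψ (v.coeff ε)).re * (ψ (v.coeff ε)).re) : ℝ) : ℂ)
            = ∑ ε : Γ, (((ψ (v.coeff ε)).re * (ψ (v.coeff ε)).re : ℝ) : ℂ) from
          map_sum Complex.ofRealHom _ _]
        exact Finset.sum_congr rfl fun ε _ => (hterm ε).symm
      rw [hψsum] at h3
      exact_mod_cast h3
    have hle : (ψ (v.coeff δ)).re * (ψ (v.coeff δ)).re ≤ 1 := by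
      rw [← hsum']
      exact Finset.single_le_sum (f := fun ε : Γ => (ψ (v.coeff ε)).re * (ψ (v.coeff ε)).re)
        (fun ε _ => mul_self_nonneg _) (Finset.mem_univ δ)
    have : ‖ψ (v.coeff δ)‖ = |(ψ (v.coeff δ)).re| := by
      rw [hz (v.coeff δ), Complex.norm_real, Real.norm_eq_abs]
      simp
    rw [show φ ((v.coeff δ : 𝓞 K) : K) = ψ (v.coeff δ) from rfl, this]
    nlinarith [abs_nonneg ((ψ (v.coeff δ)).re), abs_mul_abs_self ((ψ (v.coeff δ)).re)]
  -- the support has exactly one element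
  have hcard : v.coeff.support.card = 1 := by
    have h1 : ∑ δ : Γ, v.coeff δ * v.coeff δ = ∑ δ ∈ v.coeff.support, v.coeff δ * v.coeff δ :=
      (Finset.sum_subset (Finset.subset_univ _) (fun δ _ hδ => by
        rw [Finsupp.notMem_support_iff.mp hδ, mul_zero])).symm
    have h2 : ∑ δ ∈ v.coeff.support, v.coeff δ * v.coeff δ = (v.coeff.support.card : 𝓞 K) := by
      rw [Finset.card_eq_sum_ones, Nat.cast_sum]
      refine Finset.sum_congr rfl fun δ hδ => ?_
      rcases hcoef δ with h | h
      · exact absurd h (Finsupp.mem_support_iff.mp hδ)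
      · rw [h]; simp
    have : (v.coeff.support.card : 𝓞 K) = ((1 : ℕ) : 𝓞 K) := by
      rw [← h2, ← h1, hsum]; simp
    exact_mod_cast this
  obtain ⟨γ, hb, hvb⟩ := Finsupp.card_support_eq_one.mp hcard
  refine ⟨γ, ?_⟩
  have hbb : v.coeff γ * v.coeff γ = 1 := (hcoef γ).resolve_left hb
  rcases mul_self_eq_one_iff.mp hbb with h | h
  · left
    apply MonoidAlgebra.coeff_injective
    rw [hvb, h, MonoidAlgebra.coeff_single]
  · right
    apply MonoidAlgebra.coeff_injective
    rw [hvb, h, MonoidAlgebra.coeff_neg, MonoidAlgebra.coeff_single, Finsupp.single_neg]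
end
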